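/- Let G be a finite simple graph on vertex set V and let k be a natural number. Then the number of edges {u, v} of G with min(c(u), c(v)) = k (i.e., one endpoint has core number exactly k and the other has core number at least k) is at most k times the number of vertices with core number exactly k. -/

import Mathlib

/-- The core number of a vertex `v`: the largest `k` such that there is a set `S` of vertices
containing `v` in which every vertex has at least `k` neighbors inside `S`. -/
noncomputable def coreNumber {V : Type*} [Fintype V] [DecidableEq V]
    (G : SimpleGraph V) [DecidableRel G.Adj] (v : V) : ℕ :=
  sSup {k : ℕ | ∃ S : Finset V, v ∈ S ∧ ∀ u ∈ S, k ≤ (S.filter (G.Adj u)).card}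

open Finset

section aux
variable {V : Type*} [Fintype V] [DecidableEq V] (G : SimpleGraph V) [DecidableRel G.Adj]

lemma coreSet_bddAbove (v : V) :
    BddAbove {k : ℕ | ∃ S : Finset V, v ∈ S ∧ ∀ u ∈ S, k ≤ (S.filter (G.Adj u)).card} := by
  refine ⟨Fintype.card V, ?_⟩
  rintro k ⟨S, hv, hS⟩
  exact (hS v hv).trans ((card_filter_le _ _).trans (card_le_univ S))

lemma le_coreNumber {v : V} {k : ℕ} (S : Finset V) (hv : v ∈ S)
    (hS : ∀ u ∈ S, k ≤ (S.filter (G.Adj u)).card) : k ≤ coreNumber G v :=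
  le_csSup (coreSet_bddAbove G v) ⟨S, hv, hS⟩

lemma exists_witness (v : V) :
    ∃ S : Finset V, v ∈ S ∧ ∀ u ∈ S, coreNumber G v ≤ (S.filter (G.Adj u)).card := by
  have hne : ({k : ℕ | ∃ S : Finset V, v ∈ S ∧
      ∀ u ∈ S, k ≤ (S.filter (G.Adj u)).card}).Nonempty := by
    exact ⟨0, {v}, by simp, by simp⟩
  exact Nat.sSup_mem hne (coreSet_bddAbove G v)

/-- Every vertex in a witness set has core number at least that of `v`. -/
lemma coreNumber_le_of_mem_witness {v : V} {S : Finset V}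
    (hS : ∀ u ∈ S, coreNumber G v ≤ (S.filter (G.Adj u)).card) {w : V} (hw : w ∈ S) :
    coreNumber G v ≤ coreNumber G w :=
  le_coreNumber G S hw hS

open scoped Classical in
/-- Every vertex with core number ≥ m has at least m neighbors among such vertices. -/
lemma deg_in_core (m : ℕ) {u : V} (hu : m ≤ coreNumber G u) :
    m ≤ (((univ : Finset V).filter (fun w => m ≤ coreNumber G w)).filter (G.Adj u)).card := by
  obtain ⟨S, hvS, hS⟩ := exists_witness G u
  have hsub : S ⊆ (univ : Finset V).filter (fun w => m ≤ coreNumber G w) := by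
    intro w hw
    simp only [mem_filter, mem_univ, true_and]
    exact hu.trans (coreNumber_le_of_mem_witness G hS hw)
  calc m ≤ coreNumber G u := hu
    _ ≤ (S.filter (G.Adj u)).card := hS u hvS
    _ ≤ _ := card_le_card (monotone_filter_left _ hsub)

/-- Key claim: a nonempty set of core-k vertices has one with few neighbors in A' ∪ B. -/
lemma exists_low (k : ℕ) (A' B : Finset V) (hne : A'.Nonempty)
    (hA' : ∀ v ∈ A', coreNumber G v = k)
    (hB : ∀ u ∈ B, k + 1 ≤ (B.filter (G.Adj u)).card) :
    ∃ v ∈ A', ((A' ∪ B).filter (G.Adj v)).card ≤ k := by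
  by_contra h
  push_neg at h
  obtain ⟨v, hv⟩ := hne
  have hk : k + 1 ≤ coreNumber G v := by
    apply le_coreNumber G (A' ∪ B) (mem_union_left _ hv)
    intro u hu
    rcases mem_union.1 hu with h1 | h1
    · exact h u h1
    · exact (hB u h1).trans (card_le_card (monotone_filter_left _ subset_union_right))
  have := hA' v hv
  omega

open scoped Classical in
lemma count_le (k : ℕ) (B : Finset V)
    (hB : ∀ u ∈ B, k + 1 ≤ (B.filter (G.Adj u)).card) :
    ∀ A' : Finset V, (∀ v ∈ A', coreNumber G v = k) →
      (G.edgeFinset.filter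
        (fun e => (∀ x ∈ e, x ∈ A' ∪ B) ∧ ∃ x ∈ e, x ∈ A')).card ≤ k * A'.card := by
  intro A'
  induction A' using Finset.strongInduction with
  | _ A' ih =>
    intro hA'
    rcases A'.eq_empty_or_nonempty with rfl | hne
    · simp
    obtain ⟨v, hv, hdeg⟩ := exists_low G k A' B hne hA' hB
    set E := G.edgeFinset.filter
      (fun e => (∀ x ∈ e, x ∈ A' ∪ B) ∧ ∃ x ∈ e, x ∈ A') with hE
    have hsplit : E.card = (E.filter (fun e => v ∈ e)).card
        + (E.filter (fun e => ¬ v ∈ e)).card :=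
      (card_filter_add_card_filter_not _).symm
    -- edges through v
    have h1 : (E.filter (fun e => v ∈ e)).card ≤ k := by
      refine le_trans ?_ hdeg
      apply card_le_card_of_injOn
        (fun e => if h : v ∈ e then Sym2.Mem.other' h else v)
      · intro e he
        rw [hE] at he
        simp only [mem_coe, mem_filter] at he
        obtain ⟨⟨heE, hall, _⟩, hve⟩ := he
        beta_reduce
        rw [dif_pos hve]
        have hmem : Sym2.Mem.other' hve ∈ e := Sym2.other_mem' hve
        have hspec : s(v, Sym2.Mem.other' hve) = e := Sym2.other_spec' hve
        simp only [mem_coe, mem_filter]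
        refine ⟨hall _ hmem, ?_⟩
        have : e ∈ G.edgeSet := SimpleGraph.mem_edgeFinset.mp heE
        rw [← hspec] at this
        exact this
      · intro e1 he1 e2 he2 hfe
        simp only [mem_coe, hE, mem_filter] at he1 he2
        simp only at hfe
        rw [dif_pos he1.2, dif_pos he2.2] at hfe
        rw [← Sym2.other_spec' he1.2, ← Sym2.other_spec' he2.2, hfe]
    -- edges avoiding v
    have h2 : (E.filter (fun e => ¬ v ∈ e)) ⊆ G.edgeFinset.filter
        (fun e => (∀ x ∈ e, x ∈ (A'.erase v) ∪ B) ∧ ∃ x ∈ e, x ∈ A'.erase v) := by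
      intro e he
      simp only [mem_filter, hE] at he ⊢
      obtain ⟨⟨heE, hall, x, hxe, hxA⟩, hnv⟩ := he
      refine ⟨heE, ?_, x, hxe, mem_erase.mpr ⟨?_, hxA⟩⟩
      · intro y hy
        rcases mem_union.1 (hall y hy) with h | h
        · exact mem_union_left _ (mem_erase.mpr ⟨fun hyv => hnv (hyv ▸ hy), h⟩)
        · exact mem_union_right _ h
      · exact fun hxv => hnv (hxv ▸ hxe)
    have h2' : (E.filter (fun e => ¬ v ∈ e)).card ≤ k * (A'.erase v).card :=
      le_trans (card_le_card h2)
        (ih (A'.erase v) (erase_ssubset hv) (fun w hw => hA' w (mem_of_mem_erase hw)))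
    have hcard : (A'.erase v).card = A'.card - 1 := card_erase_of_mem hv
    have hpos : 1 ≤ A'.card := card_pos.mpr ⟨v, hv⟩
    calc E.card = _ := hsplit
      _ ≤ k + k * (A'.card - 1) := Nat.add_le_add h1 (hcard ▸ h2')
      _ ≤ k * A'.card := by
          have : A'.card - 1 + 1 = A'.card := Nat.succ_pred_eq_of_pos hpos
          nlinarith [Nat.mul_le_mul_left k (Nat.sub_le A'.card 1)]
end aux

/-- The number of edges whose endpoints' minimum core number is exactly `k` (one endpoint has
core number exactly `k` and the other at least `k`) is at most `k` times the number of
vertices with core number exactly `k`. -/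
theorem outcore_le_k_mul_core {V : Type*} [Fintype V] [DecidableEq V]
    (G : SimpleGraph V) [DecidableRel G.Adj] (k : ℕ) :
    {e ∈ G.edgeSet | ∃ u v : V, e = s(u, v) ∧
        min (coreNumber G u) (coreNumber G v) = k}.ncard
      ≤ k * {v : V | coreNumber G v = k}.ncard := by
  classical
  set A : Finset V := (univ : Finset V).filter (fun v => coreNumber G v = k) with hA
  set B : Finset V := (univ : Finset V).filter (fun v => k + 1 ≤ coreNumber G v) with hB
  have hBdeg : ∀ u ∈ B, k + 1 ≤ (B.filter (G.Adj u)).card := by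
    intro u hu
    rw [hB] at hu
    simp only [mem_filter, mem_univ, true_and] at hu
    exact deg_in_core G (k + 1) hu
  have hAcore : ∀ v ∈ A, coreNumber G v = k := by
    intro v hv; rw [hA] at hv; simpa using hv
  -- identify the LHS set as a finset coercion
  have hset : {e ∈ G.edgeSet | ∃ u v : V, e = s(u, v) ∧
      min (coreNumber G u) (coreNumber G v) = k}
      = ↑(G.edgeFinset.filter (fun e => ∃ u v : V, e = s(u, v) ∧
        min (coreNumber G u) (coreNumber G v) = k)) := by
    ext e
    simp [Set.mem_setOf_eq, SimpleGraph.mem_edgeFinset]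
  have hVset : {v : V | coreNumber G v = k} = ↑A := by
    ext v; simp [hA]
  rw [hset, hVset, Set.ncard_coe_finset, Set.ncard_coe_finset]
  have hsub : G.edgeFinset.filter (fun e => ∃ u v : V, e = s(u, v) ∧
      min (coreNumber G u) (coreNumber G v) = k)
      ⊆ G.edgeFinset.filter
        (fun e => (∀ x ∈ e, x ∈ A ∪ B) ∧ ∃ x ∈ e, x ∈ A) := by
    intro e he
    simp only [mem_filter] at he ⊢
    obtain ⟨heE, u, w, rfl, hmin⟩ := he
    have hu : k ≤ coreNumber G u := le_trans (le_of_eq hmin.symm) (min_le_left _ _)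
    have hw : k ≤ coreNumber G w := le_trans (le_of_eq hmin.symm) (min_le_right _ _)
    have hmemAB : ∀ x : V, k ≤ coreNumber G x → x ∈ A ∪ B := by
      intro x hx
      rcases eq_or_lt_of_le hx with h | h
      · exact mem_union_left _ (by simp [hA, h.symm])
      · exact mem_union_right _ (by simp [hB]; omega)
    refine ⟨heE, ?_, ?_⟩
    · intro x hxe
      rcases Sym2.mem_iff.mp hxe with rfl | rfl
      · exact hmemAB x hu
      · exact hmemAB x hw
    · rcases min_cases (coreNumber G u) (coreNumber G w) with ⟨h1, _⟩ | ⟨h1, _⟩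
      · exact ⟨u, Sym2.mem_mk_left _ _, by simp [hA, h1 ▸ hmin]⟩
      · exact ⟨w, Sym2.mem_mk_right _ _, by simp [hA, h1 ▸ hmin]⟩
  exact le_trans (card_le_card hsub) (count_le G k B hBdeg A hAcore)
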